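/- For the scalar case σ = 1 (s = 0), the function v(r) = (r/(2M))·P_ℓ(r/M − 1), where P_ℓ is the ℓ-th Legendre polynomial, solves the zero-energy equation −(1 − 2M/r) v'' − (2M/r²) v' + (ℓ(ℓ+1)/r² + 2M/r³) v = 0 on (2M, ∞), and v(r) is asymptotic to a nonzero constant multiple of r^{ℓ+1} as r → ∞. In particular, this solution is unbounded on (2M,∞) for every ℓ ≥ 1. -/

import Mathlib

open Set Filter Polynomial

noncomputable def legendreP (l : ℕ) : ℝ → ℝ := fun w =>
  (1 / (2 ^ l * (Nat.factorial l : ℝ))) * iteratedDeriv l (fun t : ℝ => (t ^ 2 - 1) ^ l) w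


noncomputable def rod (l : ℕ) : ℝ[X] := ((X : ℝ[X]) ^ 2 - 1) ^ l

noncomputable def legQ (l : ℕ) : ℝ[X] := derivative^[l] (rod l)

lemma iteratedDeriv_polyeval (p : ℝ[X]) (n : ℕ) :
    iteratedDeriv n (fun t : ℝ => p.eval t) = fun t => (derivative^[n] p).eval t := by
  induction n with
  | zero => simp
  | succ n ih =>
    rw [iteratedDeriv_succ, ih]
    funext t
    rw [Function.iterate_succ_apply']
    exact Polynomial.deriv _

lemma legendreP_eq (l : ℕ) (w : ℝ) :
    legendreP l w = (1 / (2 ^ l * (Nat.factorial l : ℝ))) * (legQ l).eval w := by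
  have : (fun t : ℝ => (t ^ 2 - 1) ^ l) = fun t : ℝ => (rod l).eval t := by
    funext t; simp [rod]
  rw [legendreP, this, iteratedDeriv_polyeval, legQ]

lemma rod_base (l : ℕ) :
    ((X : ℝ[X]) ^ 2 - 1) * derivative (rod l) = C (2 * (l : ℝ)) * X * rod l := by
  cases l with
  | zero => simp [rod]
  | succ m =>
    rw [rod, derivative_pow]
    have h1 : derivative ((X : ℝ[X]) ^ 2 - 1) = C 2 * X := by
      simp [derivative_X_pow]
      rw [← C_1, ← C_add]; norm_num
    rw [h1]
    have h2 : ((X : ℝ[X]) ^ 2 - 1) * ((X ^ 2 - 1) ^ (m + 1 - 1)) = (X ^ 2 - 1) ^ (m + 1) := by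
      rw [Nat.add_sub_cancel, ← pow_succ']
    have h3 : (C (2 * ((m : ℝ) + 1)) : ℝ[X]) = C 2 * C ((m : ℝ) + 1) := by
      rw [← C_mul]
    simp only [Nat.add_sub_cancel]
    push_cast
    rw [h3]
    ring

lemma natdeg_sq : ((X : ℝ[X]) ^ 2 - 1).natDegree = 2 := by
  have : ((X : ℝ[X]) ^ 2 - 1) = X ^ 2 - C 1 := by simp
  rw [this, natDegree_X_pow_sub_C]

lemma choose_mul_two (m : ℕ) : (m + 2).choose m * 2 = (m + 2) * (m + 1) := by
  have h1 : (m + 2).choose m = (m + 2).choose 2 := by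
    simpa using (Nat.choose_symm (n := m + 2) (k := 2) (by omega))
  rw [h1, Nat.choose_two_right]
  have h3 : (m + 2) * (m + 2 - 1) = (m + 1) * (m + 2) := by
    rw [show m + 2 - 1 = m + 1 from rfl]; ring
  obtain ⟨c, hc⟩ := Nat.even_mul_succ_self (m + 1)
  have h2 : 2 ∣ (m + 2) * (m + 2 - 1) := ⟨c, by rw [h3, hc]; omega⟩
  rw [Nat.div_mul_cancel h2, h3]; ring

lemma leibnizL (m : ℕ) :
    derivative^[m + 2] (((X : ℝ[X]) ^ 2 - 1) * derivative (rod (m + 1)))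
      = ((X : ℝ[X]) ^ 2 - 1) * derivative^[m + 3] (rod (m + 1))
        + (m + 2) • (C 2 * X * derivative^[m + 2] (rod (m + 1)))
        + ((m + 2).choose m) • (C 2 * derivative^[m + 1] (rod (m + 1))) := by
  rw [iterate_derivative_mul, Finset.sum_range_succ, Finset.sum_range_succ]
  have hz : ∑ k ∈ Finset.range (m + 1),
      (m + 2).choose k • (derivative^[m + 2 - k] ((X : ℝ[X]) ^ 2 - 1) * derivative^[k] (derivative (rod (m + 1))))
      = (m + 2).choose m • (derivative^[2] ((X : ℝ[X]) ^ 2 - 1) * derivative^[m] (derivative (rod (m + 1)))) := by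
    rw [Finset.sum_eq_single_of_mem m (Finset.self_mem_range_succ m)]
    · have h : m + 2 - m = 2 := by omega
      rw [h]
    · intro k hk hkm
      have hk' : k < m := lt_of_le_of_ne (Nat.lt_succ_iff.mp (Finset.mem_range.mp hk)) hkm
      rw [Polynomial.iterate_derivative_eq_zero (p := ((X : ℝ[X]) ^ 2 - 1)) (by rw [natdeg_sq]; omega),
        zero_mul, smul_zero]
  rw [hz]
  have hd1 : derivative ((X : ℝ[X]) ^ 2 - 1) = C 2 * X := by
    simp [derivative_X_pow]; rw [← C_1, ← C_add]; norm_num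
  have hd2 : derivative^[2] ((X : ℝ[X]) ^ 2 - 1) = C 2 := by
    simp [Function.iterate_succ_apply', hd1]
  simp only [Nat.sub_self, Nat.add_sub_cancel_left, Nat.add_sub_cancel, Function.iterate_zero,
    id_eq, hd1, hd2, Nat.choose_self, Nat.choose_succ_self_right, one_smul]
  simp only [show m + 2 - (m + 1) = 1 from by omega, Function.iterate_one, hd1,
    ← Function.iterate_succ_apply]
  abel

lemma leibnizR (m : ℕ) :
    derivative^[m + 2] (C (2 * ((m : ℝ) + 1)) * X * rod (m + 1))
      = C (2 * ((m : ℝ) + 1)) * X * derivative^[m + 2] (rod (m + 1))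
        + (m + 2) • (C (2 * ((m : ℝ) + 1)) * derivative^[m + 1] (rod (m + 1))) := by
  rw [iterate_derivative_mul, Finset.sum_range_succ, Finset.sum_range_succ]
  have hm : (2 * ((m : ℝ) + 1)) ≠ 0 := by positivity
  have hz : ∑ k ∈ Finset.range (m + 1),
      (m + 2).choose k • (derivative^[m + 2 - k] (C (2 * ((m : ℝ) + 1)) * X) * derivative^[k] (rod (m + 1))) = 0 := by
    apply Finset.sum_eq_zero
    intro k hk
    rw [Polynomial.iterate_derivative_eq_zero
      (by rw [natDegree_C_mul_X _ hm]; have := Finset.mem_range.mp hk; omega), zero_mul, smul_zero]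
  rw [hz, zero_add]
  have hd : derivative (C (2 * ((m : ℝ) + 1)) * X) = C (2 * ((m : ℝ) + 1)) := by simp
  simp only [Nat.add_sub_cancel, show m + 2 - (m + 1) = 1 from by omega, Function.iterate_one, hd,
    Nat.choose_self, Nat.choose_succ_self_right, one_smul, Function.iterate_zero, id_eq,
    Nat.sub_self, nsmul_eq_mul]
  push_cast
  ring

lemma legendre_ode (l : ℕ) (w : ℝ) :
    (1 - w ^ 2) * (derivative (derivative (legQ l))).eval w
      - 2 * w * (derivative (legQ l)).eval w
      + ((l : ℝ) * ((l : ℝ) + 1)) * (legQ l).eval w = 0 := by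
  cases l with
  | zero => simp [legQ, rod]
  | succ m =>
    have H := congrArg (fun p : ℝ[X] => (derivative^[m + 2] p).eval w) (rod_base (m + 1))
    push_cast at H
    simp only [leibnizL m, leibnizR m] at H
    have e1 : derivative^[m + 1] (rod (m + 1)) = legQ (m + 1) := rfl
    have e2 : derivative^[m + 2] (rod (m + 1)) = derivative (legQ (m + 1)) := by
      rw [Function.iterate_succ_apply', e1]
    have e3 : derivative^[m + 3] (rod (m + 1)) = derivative (derivative (legQ (m + 1))) := by
      rw [Function.iterate_succ_apply', e2]
    rw [e1, e2, e3] at H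
    simp only [eval_add, eval_mul, eval_smul, eval_sub, eval_pow, eval_X, eval_one, eval_C,
      eval_natCast, eval_ofNat, smul_eq_mul, nsmul_eq_mul] at H
    have hc := choose_mul_two m
    have hc' : ((m + 2).choose m : ℝ) * 2 = ((m : ℝ) + 2) * ((m : ℝ) + 1) := by
      exact_mod_cast congrArg (Nat.cast : ℕ → ℝ) hc
    push_cast
    push_cast at H
    linear_combination (-1 : ℝ) * H + (legQ (m + 1)).eval w * hc'

lemma hasDerivAt_peval (M : ℝ) (p : ℝ[X]) (ρ : ℝ) :
    HasDerivAt (fun x : ℝ => p.eval (x / M - 1))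
      ((derivative p).eval (ρ / M - 1) * (1 / M)) ρ := by
  have hw : HasDerivAt (fun x : ℝ => x / M - 1) (1 / M) ρ := by
    simpa using ((hasDerivAt_id ρ).div_const M).sub_const 1
  exact (p.hasDerivAt _).comp ρ hw

lemma hasDerivAt_v (M c0 : ℝ) (p : ℝ[X]) (ρ : ℝ) :
    HasDerivAt (fun x : ℝ => x / (2 * M) * (c0 * p.eval (x / M - 1)))
      (1 / (2 * M) * (c0 * p.eval (ρ / M - 1))
        + ρ / (2 * M) * (c0 * ((derivative p).eval (ρ / M - 1) * (1 / M)))) ρ := by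
  have hx : HasDerivAt (fun x : ℝ => x / (2 * M)) (1 / (2 * M)) ρ := by
    simpa using (hasDerivAt_id ρ).div_const (2 * M)
  exact hx.mul ((hasDerivAt_peval M p ρ).const_mul c0)

lemma hasDerivAt_v' (M c0 : ℝ) (p : ℝ[X]) (ρ : ℝ) :
    HasDerivAt (fun x : ℝ => 1 / (2 * M) * (c0 * p.eval (x / M - 1))
        + x / (2 * M) * (c0 * ((derivative p).eval (x / M - 1) * (1 / M))))
      (1 / (2 * M) * (c0 * ((derivative p).eval (ρ / M - 1) * (1 / M)))
        + (1 / (2 * M) * (c0 * ((derivative p).eval (ρ / M - 1) * (1 / M)))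
          + ρ / (2 * M) * (c0 * ((derivative (derivative p)).eval (ρ / M - 1) * (1 / M) * (1 / M))))) ρ := by
  have hx : HasDerivAt (fun x : ℝ => x / (2 * M)) (1 / (2 * M)) ρ := by
    simpa using (hasDerivAt_id ρ).div_const (2 * M)
  have h1 : HasDerivAt (fun x : ℝ => 1 / (2 * M) * (c0 * p.eval (x / M - 1)))
      (1 / (2 * M) * (c0 * ((derivative p).eval (ρ / M - 1) * (1 / M)))) ρ :=
    ((hasDerivAt_peval M p ρ).const_mul c0).const_mul (1 / (2 * M))
  have h2 : HasDerivAt (fun x : ℝ => x / (2 * M) * (c0 * ((derivative p).eval (x / M - 1) * (1 / M))))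
      (1 / (2 * M) * (c0 * ((derivative p).eval (ρ / M - 1) * (1 / M)))
        + ρ / (2 * M) * (c0 * ((derivative (derivative p)).eval (ρ / M - 1) * (1 / M) * (1 / M)))) ρ := by
    have := hx.mul (((hasDerivAt_peval M (derivative p) ρ).mul_const (1 / M)).const_mul c0)
    exact this
  exact h1.add h2

lemma ode_part (M : ℝ) (hM : 0 < M) (ℓ : ℕ) (r : ℝ) (hr : r ∈ Set.Ioi (2 * M)) :
    -(1 - 2 * M / r) *
        deriv (deriv fun ρ : ℝ => (ρ / (2 * M)) * legendreP ℓ (ρ / M - 1)) r -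
      (2 * M / r ^ 2) * deriv (fun ρ : ℝ => (ρ / (2 * M)) * legendreP ℓ (ρ / M - 1)) r +
      ((ℓ * (ℓ + 1) : ℝ) / r ^ 2 + 2 * M / r ^ 3) *
        ((r / (2 * M)) * legendreP ℓ (r / M - 1)) = 0 := by
  have hM0 : M ≠ 0 := ne_of_gt hM
  have hr0 : 0 < r := lt_trans (by positivity) (mem_Ioi.mp hr)
  set P := legQ ℓ with hP
  have hfun : (fun ρ : ℝ => ρ / (2 * M) * legendreP ℓ (ρ / M - 1))
      = fun ρ : ℝ => ρ / (2 * M) * ((1 / (2 ^ ℓ * (ℓ.factorial : ℝ))) * P.eval (ρ / M - 1)) :=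
    funext fun ρ => by rw [legendreP_eq]
  have hD1 : deriv (fun ρ : ℝ => ρ / (2 * M) * legendreP ℓ (ρ / M - 1))
      = fun ρ : ℝ => 1 / (2 * M) * ((1 / (2 ^ ℓ * (ℓ.factorial : ℝ))) * P.eval (ρ / M - 1))
          + ρ / (2 * M) * ((1 / (2 ^ ℓ * (ℓ.factorial : ℝ))) * ((derivative P).eval (ρ / M - 1) * (1 / M))) := by
    rw [hfun]; funext ρ; exact (hasDerivAt_v M _ P ρ).deriv
  rw [hD1, legendreP_eq, (hasDerivAt_v' M (1 / (2 ^ ℓ * (ℓ.factorial : ℝ))) P r).deriv]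
  beta_reduce
  have hode := legendre_ode ℓ (r / M - 1)
  rw [← hP] at hode
  have hr0' : r ≠ 0 := ne_of_gt hr0
  set w := r / M - 1 with hw
  set e0 := P.eval w with he0
  set e1 := (derivative P).eval w with he1
  set e2 := (derivative (derivative P)).eval w with he2
  rw [hw] at hode
  field_simp at hode
  field_simp
  linear_combination r * hode

lemma rod_monic (l : ℕ) : (rod l).Monic := by
  have h : ((X : ℝ[X]) ^ 2 - 1) = X ^ 2 - C 1 := by simp
  exact (h ▸ (monic_X_pow_sub_C (1 : ℝ) two_ne_zero) : ((X : ℝ[X]) ^ 2 - 1).Monic).pow l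

lemma rod_natDegree (l : ℕ) : (rod l).natDegree = 2 * l := by
  have h : ((X : ℝ[X]) ^ 2 - 1) = X ^ 2 - C 1 := by simp
  rw [rod, Monic.natDegree_pow (by rw [h]; exact monic_X_pow_sub_C (1 : ℝ) two_ne_zero), h,
    natDegree_X_pow_sub_C]
  ring

lemma legQ_coeff (l : ℕ) : (legQ l).coeff l = ((2 * l).descFactorial l : ℝ) := by
  rw [legQ, Polynomial.coeff_iterate_derivative]
  have h : l + l = 2 * l := by ring
  rw [h, show (rod l).coeff (2 * l) = 1 from by
    rw [← rod_natDegree l]; exact (rod_monic l).coeff_natDegree]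
  simp

lemma legQ_natDegree (l : ℕ) : (legQ l).natDegree = l := by
  have h1 : (legQ l).natDegree ≤ l := by
    have := Polynomial.natDegree_iterate_derivative (rod l) l
    rwa [rod_natDegree, show 2 * l - l = l from by omega] at this
  have h2 : (legQ l).coeff l ≠ 0 := by
    rw [legQ_coeff]
    have : 0 < (2 * l).descFactorial l := Nat.pos_of_ne_zero (fun h => absurd (Nat.descFactorial_eq_zero_iff_lt.mp h) (by omega))
    positivity
  exact le_antisymm h1 (le_natDegree_of_ne_zero h2)

lemma legQ_leadingCoeff (l : ℕ) : (legQ l).leadingCoeff = ((2 * l).descFactorial l : ℝ) := by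
  rw [leadingCoeff, legQ_natDegree, legQ_coeff]

lemma legQ_leadingCoeff_pos (l : ℕ) : 0 < (legQ l).leadingCoeff := by
  rw [legQ_leadingCoeff]
  have : 0 < (2 * l).descFactorial l := Nat.pos_of_ne_zero (fun h => absurd (Nat.descFactorial_eq_zero_iff_lt.mp h) (by omega))
  exact_mod_cast this

lemma tendsto_part (M : ℝ) (hM : 0 < M) (ℓ : ℕ) :
    ∃ c : ℝ, 0 < c ∧ Tendsto (fun r : ℝ => ((r / (2 * M)) * legendreP ℓ (r / M - 1)) / r ^ (ℓ + 1))
      atTop (nhds c) := by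
  have hM0 : M ≠ 0 := ne_of_gt hM
  set c0 := 1 / (2 ^ ℓ * (ℓ.factorial : ℝ)) with hc0
  have hc0pos : 0 < c0 := by rw [hc0]; positivity
  set q : ℝ[X] := C (1 / M) * X + C (-1) with hq
  set Ft : ℝ[X] := C (1 / (2 * M)) * X * ((C c0 * legQ ℓ).comp q) with hFt
  have h1M : (1 : ℝ) / M ≠ 0 := by positivity
  have hqdeg : q.natDegree = 1 := natDegree_linear h1M
  have hqlead : q.leadingCoeff = 1 / M := leadingCoeff_linear h1M
  have hpdeg : (C c0 * legQ ℓ).natDegree = ℓ := by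
    rw [natDegree_C_mul (ne_of_gt hc0pos), legQ_natDegree]
  have hcompdeg : ((C c0 * legQ ℓ).comp q).natDegree = ℓ := by
    rw [natDegree_comp, hpdeg, hqdeg, mul_one]
  have hcomplead : ((C c0 * legQ ℓ).comp q).leadingCoeff
      = c0 * (legQ ℓ).leadingCoeff * (1 / M) ^ ℓ := by
    rw [leadingCoeff_comp (by rw [hqdeg]; omega), hqlead, hpdeg, leadingCoeff_mul, leadingCoeff_C]
  have hleadpos : 0 < Ft.leadingCoeff := by
    rw [hFt, leadingCoeff_mul, leadingCoeff_C_mul_X, hcomplead]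
    have := legQ_leadingCoeff_pos ℓ
    positivity
  have hFtne : Ft ≠ 0 := leadingCoeff_ne_zero.mp (ne_of_gt hleadpos)
  have hcompne : ((C c0 * legQ ℓ).comp q) ≠ 0 := by
    apply leadingCoeff_ne_zero.mp
    rw [hcomplead]
    have := legQ_leadingCoeff_pos ℓ
    positivity
  have hCXne : (C (1 / (2 * M)) * X : ℝ[X]) ≠ 0 := by
    apply leadingCoeff_ne_zero.mp
    rw [leadingCoeff_C_mul_X]
    positivity
  have hFtdeg : Ft.natDegree = ℓ + 1 := by
    rw [hFt, natDegree_mul hCXne hcompne, natDegree_C_mul_X _ (by positivity : (1:ℝ)/(2*M) ≠ 0),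
      hcompdeg, add_comm]
  have hdeg2 : Ft.degree = ((X : ℝ[X]) ^ (ℓ + 1)).degree := by
    rw [degree_eq_natDegree hFtne, hFtdeg, degree_X_pow]
  have htend := Polynomial.div_tendsto_leadingCoeff_div_of_degree_eq Ft ((X : ℝ[X]) ^ (ℓ + 1)) hdeg2
  rw [leadingCoeff_X_pow, div_one] at htend
  refine ⟨Ft.leadingCoeff, hleadpos, ?_⟩
  have heq : (fun r : ℝ => ((r / (2 * M)) * legendreP ℓ (r / M - 1)) / r ^ (ℓ + 1))
      = fun x : ℝ => Ft.eval x / ((X : ℝ[X]) ^ (ℓ + 1)).eval x := by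
    funext x
    rw [legendreP_eq, hFt, hq]
    simp only [eval_mul, eval_comp, eval_add, eval_C, eval_X, eval_pow]
    rw [show 1 / M * x + -1 = x / M - 1 by ring, ← hc0]
    ring
  rw [heq]
  exact htend

theorem legendre_zero_energy_solution (M : ℝ) (hM : 0 < M) (ℓ : ℕ) :
    (∀ r ∈ Set.Ioi (2 * M),
      -(1 - 2 * M / r) *
          deriv (deriv fun ρ : ℝ => (ρ / (2 * M)) * legendreP ℓ (ρ / M - 1)) r -
        (2 * M / r ^ 2) * deriv (fun ρ : ℝ => (ρ / (2 * M)) * legendreP ℓ (ρ / M - 1)) r +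
        ((ℓ * (ℓ + 1) : ℝ) / r ^ 2 + 2 * M / r ^ 3) *
          ((r / (2 * M)) * legendreP ℓ (r / M - 1)) = 0) ∧
    (∃ c : ℝ, c ≠ 0 ∧
      Filter.Tendsto (fun r : ℝ => ((r / (2 * M)) * legendreP ℓ (r / M - 1)) / r ^ (ℓ + 1))
        Filter.atTop (nhds c)) ∧
    (1 ≤ ℓ → ¬ ∃ B : ℝ, ∀ r ∈ Set.Ioi (2 * M),
      |(r / (2 * M)) * legendreP ℓ (r / M - 1)| ≤ B) := by
  obtain ⟨c, hc, ht⟩ := tendsto_part M hM ℓ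
  refine ⟨fun r hr => ode_part M hM ℓ r hr, ⟨c, ne_of_gt hc, ht⟩, ?_⟩
  rintro - ⟨B, hB⟩
  have htop : Tendsto (fun r : ℝ => (r / (2 * M)) * legendreP ℓ (r / M - 1)) atTop atTop := by
    have h := Filter.Tendsto.pos_mul_atTop hc ht
      (tendsto_pow_atTop (Nat.succ_ne_zero ℓ) : Tendsto (fun r : ℝ => r ^ (ℓ + 1)) atTop atTop)
    apply h.congr'
    filter_upwards [eventually_ge_atTop (1 : ℝ)] with r hr
    have hr0 : r ≠ 0 := by intro h0; rw [h0] at hr; linarith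
    exact div_mul_cancel₀ _ (pow_ne_zero _ hr0)
  obtain ⟨r, hr1, hr2⟩ :=
    ((htop.eventually_ge_atTop (B + 1)).and (eventually_gt_atTop (2 * M))).exists
  have h1 := hB r hr2
  have h2 := le_abs_self ((r / (2 * M)) * legendreP ℓ (r / M - 1))
  linarith
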